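/- Let X be a noetherian scheme, s a natural number, and let Z ⊆ Z' ⊆ X be closed subsets with codim(Z', X) ≥ s and codim(Z, X) ≥ s + 1. Let T be the (finite) set of generic points of those irreducible components of Z' that have codimension exactly s in X. Then there exists a closed subset Ẑ of X with Z ⊆ Ẑ ⊆ Z' such that: (i) codim(Ẑ, X) ≥ s + 1; (ii) Z' = Ẑ ∪ ⋃_{t ∈ T} closure({t}); (iii) for any two distinct points t ≠ t' in T one has closure({t}) ∩ closure({t'}) ⊆ Ẑ, so the sets closure({t}) \ Ẑ for t ∈ T are pairwise disjoint; and (iv) t ∉ Ẑ for every t ∈ T. In particular, U := X \ Ẑ is an open neighbourhood of T in which the intersection of closure(T) with U splits into the disjoint union of the closures of the points of T in U. -/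

import Mathlib

open Set AlgebraicGeometry

/-- The codimension of an irreducible closed subset `Z` of a topological space `X`:
the supremum of all `s : ℕ` such that there is a chain
`Z = Z_s ⊊ Z_{s-1} ⊊ … ⊊ Z_0 ⊆ X` of nonempty irreducible closed subsets of `X`. -/
noncomputable def irredCodim {X : Type*} [TopologicalSpace X] (Z : Set X) : ℕ∞ :=
  sSup {n : ℕ∞ | ∃ s : ℕ, n = (s : ℕ∞) ∧ ∃ c : Fin (s + 1) → Set X,
    c 0 = Z ∧ StrictMono c ∧ ∀ i, IsClosed (c i) ∧ IsIrreducible (c i)}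

/-- The irreducible components of a subset `Z` of a topological space `X`, i.e. the
maximal irreducible subsets of `Z`. -/
def irredComponentsIn {X : Type*} [TopologicalSpace X] (Z : Set X) : Set (Set X) :=
  {C | Maximal (fun T => T ⊆ Z ∧ IsIrreducible T) C}

/-- The codimension of an arbitrary closed subset `Z ⊆ X`: the infimum of the
codimensions of the irreducible components of `Z`; by convention `codim(∅, X) = ∞`
(the infimum of the empty set in `ℕ∞`). -/
noncomputable def setCodim {X : Type*} [TopologicalSpace X] (Z : Set X) : ℕ∞ :=
  sInf (irredCodim '' irredComponentsIn Z)

section aux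

variable {Y : Type*} [TopologicalSpace Y]

def chainProp (Z : Set Y) (n : ℕ) : Prop :=
  ∃ c : Fin (n + 1) → Set Y,
    c 0 = Z ∧ StrictMono c ∧ ∀ i, IsClosed (c i) ∧ IsIrreducible (c i)

lemma irredCodim_def (Z : Set Y) :
    irredCodim Z = sSup {n : ℕ∞ | ∃ s : ℕ, n = (s : ℕ∞) ∧ chainProp Z s} := rfl

lemma chainProp_zero {Z : Set Y} (hcl : IsClosed Z) (hirr : IsIrreducible Z) :
    chainProp Z 0 :=
  ⟨fun _ => Z, rfl,
    fun i j h => absurd (Fin.lt_def.mp h) (by have := i.isLt; have := j.isLt; omega),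
    fun _ => ⟨hcl, hirr⟩⟩

lemma chainProp_mono {W V : Set Y} (hW : IsClosed W) (hWi : IsIrreducible W)
    (hsub : W ⊆ V) {n : ℕ} (h : chainProp V n) : chainProp W n := by
  obtain ⟨c, hc0, hmono, hci⟩ := h
  refine ⟨fun k => if (k : ℕ) = 0 then W else c k, by simp, ?_, ?_⟩
  · intro i j hij
    have hij' : (i : ℕ) < (j : ℕ) := hij
    have hj : ¬((j : ℕ) = 0) := by omega
    simp only [hj, if_false]
    by_cases hi : (i : ℕ) = 0
    · simp only [hi, if_true]
      have h0j : c 0 < c j := hmono (Fin.lt_def.mpr (by simp only [Fin.val_zero]; omega))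
      exact lt_of_le_of_lt (hc0.symm ▸ hsub) h0j
    · simp only [hi, if_false]
      exact hmono hij
  · intro i
    by_cases hi : (i : ℕ) = 0
    · simp only [hi, if_true]; exact ⟨hW, hWi⟩
    · simp only [hi, if_false]; exact hci i

lemma chainProp_succ {W V : Set Y} (hW : IsClosed W) (hWi : IsIrreducible W)
    (hss : W ⊂ V) {n : ℕ} (h : chainProp V n) : chainProp W (n + 1) := by
  obtain ⟨c, hc0, hmono, hci⟩ := h
  refine ⟨fun k => if h : (k : ℕ) = 0 then W
      else c ⟨(k : ℕ) - 1, by have := k.isLt; omega⟩, by simp, ?_, ?_⟩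
  · intro i j hij
    have hij' : (i : ℕ) < (j : ℕ) := hij
    have hj : ¬((j : ℕ) = 0) := by omega
    dsimp only
    rw [dif_neg hj]
    by_cases hi : (i : ℕ) = 0
    · rw [dif_pos hi]
      exact lt_of_lt_of_le (hc0.symm ▸ hss) (hmono.monotone (Fin.zero_le _))
    · rw [dif_neg hi]
      exact hmono (Fin.mk_lt_mk.mpr (by omega))
  · intro i
    dsimp only
    by_cases hi : (i : ℕ) = 0
    · rw [dif_pos hi]; exact ⟨hW, hWi⟩
    · rw [dif_neg hi]; exact hci _

lemma irredCodim_anti {W V : Set Y} (hW : IsClosed W) (hWi : IsIrreducible W)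
    (hsub : W ⊆ V) : irredCodim V ≤ irredCodim W := by
  rw [irredCodim_def, irredCodim_def]
  refine sSup_le_sSup ?_
  rintro x ⟨m, rfl, hc⟩
  exact ⟨m, rfl, chainProp_mono hW hWi hsub hc⟩

lemma sSup_step {A B : Set ℕ∞} (hA : ∀ n ∈ A, ∃ m : ℕ, n = (m : ℕ∞)) (hne : A.Nonempty)
    (hstep : ∀ m : ℕ, (m : ℕ∞) ∈ A → ((m + 1 : ℕ) : ℕ∞) ∈ B) : sSup A + 1 ≤ sSup B := by
  refine le_of_forall_lt fun c hc => ?_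
  have hcne : c ≠ ⊤ := fun h => not_top_lt (h ▸ hc)
  obtain ⟨k, rfl⟩ := WithTop.ne_top_iff_exists.mp hcne
  have hk : (k : ℕ∞) ≤ sSup A := by
    by_cases h : sSup A = ⊤
    · exact h ▸ le_top
    · exact (ENat.lt_add_one_iff h).mp hc
  rcases Nat.eq_zero_or_pos k with hk0 | hkpos
  · obtain ⟨a, ha⟩ := hne
    obtain ⟨m, rfl⟩ := hA a ha
    refine lt_of_lt_of_le ?_ (le_sSup (hstep m ha))
    subst hk0
    exact WithTop.coe_lt_coe.mpr (Nat.succ_pos m)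
  · have h1 : ((k - 1 : ℕ) : ℕ∞) < sSup A :=
      lt_of_lt_of_le (by exact_mod_cast Nat.sub_lt hkpos one_pos) hk
    obtain ⟨a, ha, hlt⟩ := lt_sSup_iff.mp h1
    obtain ⟨m, rfl⟩ := hA a ha
    have hm : k - 1 < m := by exact_mod_cast hlt
    refine lt_of_lt_of_le ?_ (le_sSup (hstep m ha))
    exact Nat.cast_lt.mpr (by omega)

lemma irredCodim_strict {W V : Set Y} (hW : IsClosed W) (hWi : IsIrreducible W)
    (hV : IsClosed V) (hVi : IsIrreducible V) (hss : W ⊂ V) :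
    irredCodim V + 1 ≤ irredCodim W := by
  rw [irredCodim_def, irredCodim_def]
  refine sSup_step ?_ ?_ ?_
  · rintro n ⟨m, rfl, -⟩; exact ⟨m, rfl⟩
  · exact ⟨((0 : ℕ) : ℕ∞), ⟨0, rfl, chainProp_zero hV hVi⟩⟩
  · rintro m ⟨m', hm', hc⟩
    have : m = m' := by exact_mod_cast hm'
    subst this
    exact ⟨m + 1, rfl, chainProp_succ hW hWi hss hc⟩

lemma comp_closed {Z C : Set Y} (hZ : IsClosed Z) (h : C ∈ irredComponentsIn Z) :
    IsClosed C := by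
  have hsub : closure C ⊆ Z := hZ.closure_subset_iff.mpr h.1.1
  exact isClosed_of_closure_subset (h.2 ⟨hsub, h.1.2.closure⟩ subset_closure)

lemma irred_subset_sUnion {W : Set Y} (hW : IsIrreducible W) {S : Set (Set Y)}
    (hS : S.Finite) (hcl : ∀ t ∈ S, IsClosed t) (h : W ⊆ ⋃₀ S) : ∃ t ∈ S, W ⊆ t := by
  classical
  lift S to Finset (Set Y) using hS
  revert hcl h
  induction S using Finset.induction_on with
  | empty =>
    intro hcl h
    obtain ⟨x, hx⟩ := hW.nonempty
    simp only [Finset.coe_empty, sUnion_empty] at h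
    exact absurd (h hx) (Set.notMem_empty x)
  | @insert a S' ha ih =>
    intro hcl h
    rw [Finset.coe_insert, sUnion_insert] at h
    have hS'cl : IsClosed (⋃₀ (S' : Set (Set Y))) := by
      rw [sUnion_eq_biUnion]
      exact S'.finite_toSet.isClosed_biUnion fun t ht =>
        hcl t (by rw [Finset.coe_insert]; exact Set.mem_insert_iff.mpr (Or.inr ht))
    rcases (isPreirreducible_iff_isClosed_union_isClosed.mp hW.2) a _
        (hcl a (by simp)) hS'cl h with h1 | h2
    · exact ⟨a, by simp, h1⟩
    · obtain ⟨t, ht, hWt⟩ := ih (fun t ht => hcl t (by rw [Finset.coe_insert]; exact Set.mem_insert_iff.mpr (Or.inr ht))) h2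
      exact ⟨t, by rw [Finset.coe_insert]; exact Set.mem_insert_iff.mpr (Or.inr ht), hWt⟩

lemma exists_comp [TopologicalSpace.NoetherianSpace Y] {Z : Set Y} (hZ : IsClosed Z)
    {T : Set Y} (hT : IsIrreducible T) (hTZ : T ⊆ Z) :
    ∃ C ∈ irredComponentsIn Z, T ⊆ C := by
  obtain ⟨S, hSfin, hScl, hSirr, hSU⟩ :=
    TopologicalSpace.NoetherianSpace.exists_finite_set_isClosed_irreducible hZ
  have hTZ' : closure T ⊆ Z := hZ.closure_subset_iff.mpr hTZ
  obtain ⟨F, hFS, hTF⟩ := irred_subset_sUnion hT.closure hSfin hScl (hSU ▸ hTZ')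
  obtain ⟨M, hMG, hMmax⟩ := Set.Finite.exists_maximal (hSfin.subset (sep_subset _ _))
    (s := {t ∈ S | F ⊆ t}) ⟨F, hFS, Subset.rfl⟩
  have hMZ : M ⊆ Z := hSU ▸ subset_sUnion_of_mem hMG.1
  refine ⟨M, ⟨⟨hMZ, hSirr M hMG.1⟩, ?_⟩, (subset_closure.trans hTF).trans hMG.2⟩
  rintro T' ⟨hT'Z, hT'irr⟩ hMT'
  have hT'Z' : closure T' ⊆ Z := hZ.closure_subset_iff.mpr hT'Z
  obtain ⟨F', hF'S, hT'F'⟩ := irred_subset_sUnion hT'irr.closure hSfin hScl (hSU ▸ hT'Z')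
  have hF'G : F' ∈ {t ∈ S | F ⊆ t} :=
    ⟨hF'S, hMG.2.trans ((hMT'.trans subset_closure).trans hT'F')⟩
  have hMF' : M = F' := Subset.antisymm ((hMT'.trans subset_closure).trans hT'F')
    (hMmax hF'G ((hMT'.trans subset_closure).trans hT'F'))
  exact (subset_closure.trans hT'F').trans hMF'.symm.subset

lemma comps_subset [TopologicalSpace.NoetherianSpace Y] {Z : Set Y} (hZ : IsClosed Z) :
    (irredComponentsIn Z).Finite := by
  obtain ⟨S, hSfin, hScl, hSirr, hSU⟩ :=
    TopologicalSpace.NoetherianSpace.exists_finite_set_isClosed_irreducible hZ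
  refine hSfin.subset fun C hC => ?_
  obtain ⟨F, hFS, hCF⟩ := irred_subset_sUnion hC.1.2 hSfin hScl (hSU ▸ hC.1.1)
  have : F ⊆ C := hC.2 ⟨hSU ▸ subset_sUnion_of_mem hFS, hSirr F hFS⟩ hCF
  rwa [Subset.antisymm hCF this]

end aux

/-- The set of generic points of those irreducible components of `Z'` that have
codimension exactly `s` in the ambient space. -/
def genericPtsOfCodim {X : Type*} [TopologicalSpace X] (Z' : Set X) (s : ℕ) : Set X :=
  {t | ∃ C ∈ irredComponentsIn Z', IsGenericPoint t C ∧ irredCodim C = (s : ℕ∞)}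

/-- Let `X` be a noetherian scheme, `s` a natural number, and `Z ⊆ Z' ⊆ X` closed
subsets with `codim(Z', X) ≥ s` and `codim(Z, X) ≥ s + 1`.  Let `T` be the set of
generic points of those irreducible components of `Z'` that have codimension exactly
`s` in `X`.  Then there exists a closed subset `Ẑ` of `X` with `Z ⊆ Ẑ ⊆ Z'` such that:
(i) `codim(Ẑ, X) ≥ s + 1`; (ii) `Z' = Ẑ ∪ ⋃_{t ∈ T} closure {t}`; (iii) for any two
distinct points `t ≠ t'` in `T` one has `closure {t} ∩ closure {t'} ⊆ Ẑ` (so the sets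
`closure {t} \ Ẑ` for `t ∈ T` are pairwise disjoint); and (iv) `t ∉ Ẑ` for every
`t ∈ T`. -/
theorem stmt5 (X : Scheme) [IsNoetherian X] (s : ℕ) (Z Z' : Set X)
    (hZcl : IsClosed Z) (hZ'cl : IsClosed Z') (hsub : Z ⊆ Z')
    (hZ' : (s : ℕ∞) ≤ setCodim Z') (hZ : (s : ℕ∞) + 1 ≤ setCodim Z) :
    ∃ Zhat : Set X, IsClosed Zhat ∧ Z ⊆ Zhat ∧ Zhat ⊆ Z' ∧
      (s : ℕ∞) + 1 ≤ setCodim Zhat ∧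
      Z' = Zhat ∪ (⋃ t ∈ genericPtsOfCodim Z' s, closure {t}) ∧
      (∀ t ∈ genericPtsOfCodim Z' s, ∀ t' ∈ genericPtsOfCodim Z' s, t ≠ t' →
        closure {t} ∩ closure {t'} ⊆ Zhat) ∧
      (genericPtsOfCodim Z' s).Pairwise (fun t t' =>
        Disjoint (closure {t} \ Zhat) (closure {t'} \ Zhat)) ∧
      ∀ t ∈ genericPtsOfCodim Z' s, t ∉ Zhat := by
  classical
  have hCompFin : (irredComponentsIn Z').Finite := comps_subset hZ'cl
  have hCompIrr : ∀ C ∈ irredComponentsIn Z', IsIrreducible C := fun C hC => hC.1.2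
  have hCompSub : ∀ C ∈ irredComponentsIn Z', C ⊆ Z' := fun C hC => hC.1.1
  have hCompCl : ∀ C ∈ irredComponentsIn Z', IsClosed C := fun C hC => comp_closed hZ'cl hC
  have hCompCodim : ∀ C ∈ irredComponentsIn Z', (s : ℕ∞) ≤ irredCodim C := fun C hC =>
    hZ'.trans (sInf_le (mem_image_of_mem _ hC))
  have hmax : ∀ C ∈ irredComponentsIn Z', ∀ D, D ⊆ Z' → IsIrreducible D → C ⊆ D → C = D :=
    fun C hC D hDZ hDirr hCD => Subset.antisymm hCD (hC.2 ⟨hDZ, hDirr⟩ hCD)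
  set bad := {C ∈ irredComponentsIn Z' | irredCodim C ≠ (s : ℕ∞)} with hbad
  set P := {A : Set X | ∃ C ∈ irredComponentsIn Z', ∃ C' ∈ irredComponentsIn Z',
    C ≠ C' ∧ A = C ∩ C'} with hPdef
  set Q := insert Z (bad ∪ P) with hQdef
  have hPfin : P.Finite := by
    refine (hCompFin.image2 (fun a b => a ∩ b) hCompFin).subset ?_
    rintro A ⟨C, hC, C', hC', -, rfl⟩
    exact Set.mem_image2_of_mem hC hC'
  have hQfin : Q.Finite := ((hCompFin.subset (sep_subset _ _)).union hPfin).insert Z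
  have hQcl : ∀ q ∈ Q, IsClosed q := by
    intro q hq
    rcases Set.mem_insert_iff.mp hq with rfl | hq
    · exact hZcl
    · rcases hq with hq | ⟨C, hC, C', hC', -, rfl⟩
      · exact hCompCl q hq.1
      · exact (hCompCl C hC).inter (hCompCl C' hC')
  have hQclosed : IsClosed (⋃₀ Q) := by
    rw [sUnion_eq_biUnion]; exact hQfin.isClosed_biUnion hQcl
  have hQZ' : ⋃₀ Q ⊆ Z' := by
    refine sUnion_subset fun q hq => ?_
    rcases Set.mem_insert_iff.mp hq with rfl | hq
    · exact hsub
    · rcases hq with hq | ⟨C, hC, C', hC', -, rfl⟩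
      · exact hCompSub q hq.1
      · exact inter_subset_left.trans (hCompSub C hC)
  have hiii : ∀ t ∈ genericPtsOfCodim Z' s, ∀ t' ∈ genericPtsOfCodim Z' s, t ≠ t' →
      closure {t} ∩ closure {t'} ⊆ ⋃₀ Q := by
    intro t ht t' ht' htne
    obtain ⟨C, hC, hgen, hcs⟩ := ht
    obtain ⟨C', hC', hgen', hcs'⟩ := ht'
    have hCC' : C ≠ C' := by
      intro h
      have : IsGenericPoint t' C := by rw [h]; exact hgen'
      exact htne (hgen.eq this)
    rw [hgen.def, hgen'.def]
    exact subset_sUnion_of_mem (mem_insert_of_mem _ (Or.inr ⟨C, hC, C', hC', hCC', rfl⟩))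
  refine ⟨⋃₀ Q, hQclosed, subset_sUnion_of_mem (mem_insert _ _), hQZ', ?_, ?_, hiii, ?_, ?_⟩
  · -- (i) codim bound
    refine le_sInf ?_
    rintro b ⟨W, hW, rfl⟩
    have hWirr : IsIrreducible W := hW.1.2
    have hWcl : IsClosed W := comp_closed hQclosed hW
    obtain ⟨q, hq, hWq⟩ := irred_subset_sUnion hWirr hQfin hQcl hW.1.1
    rcases Set.mem_insert_iff.mp hq with hqZ | hq
    · rw [hqZ] at hWq
      obtain ⟨V, hV, hWV⟩ := exists_comp hZcl hWirr hWq
      calc (s : ℕ∞) + 1 ≤ setCodim Z := hZ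
        _ ≤ irredCodim V := sInf_le (mem_image_of_mem _ hV)
        _ ≤ irredCodim W := irredCodim_anti hWcl hWirr hWV
    · rcases hq with hq | ⟨C, hC, C', hC', hne, rfl⟩
      · have h1 : (s : ℕ∞) < irredCodim q := lt_of_le_of_ne (hCompCodim q hq.1) (Ne.symm hq.2)
        have h2 : (s : ℕ∞) + 1 ≤ irredCodim q := (ENat.add_one_le_iff (ENat.coe_ne_top s)).mpr h1
        exact h2.trans (irredCodim_anti hWcl hWirr hWq)
      · have hWC : W ⊆ C := hWq.trans inter_subset_left
        have hWneC : W ≠ C := by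
          intro h
          rw [h] at hWq
          exact hne (hmax C hC C' (hCompSub C' hC') (hCompIrr C' hC')
            (hWq.trans inter_subset_right))
        have hss : W ⊂ C := HasSubset.Subset.ssubset_of_ne hWC hWneC
        calc (s : ℕ∞) + 1 ≤ irredCodim C + 1 := add_le_add_left (hCompCodim C hC) 1
          _ ≤ irredCodim W := irredCodim_strict hWcl hWirr (hCompCl C hC) (hCompIrr C hC) hss
  · -- (ii) decomposition
    apply Subset.antisymm
    · intro x hx
      obtain ⟨C, hC, hxC⟩ := exists_comp hZ'cl isIrreducible_singleton
        (singleton_subset_iff.mpr hx)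
      by_cases hcs : irredCodim C = (s : ℕ∞)
      · obtain ⟨t, ht⟩ := QuasiSober.sober (hCompIrr C hC) (hCompCl C hC)
        refine Or.inr (mem_biUnion ⟨C, hC, ht, hcs⟩ ?_)
        rw [ht.def]
        exact hxC rfl
      · exact Or.inl (subset_sUnion_of_mem (mem_insert_of_mem _ (Or.inl ⟨hC, hcs⟩)) (hxC rfl))
    · refine union_subset hQZ' (iUnion₂_subset fun t ht => ?_)
      obtain ⟨C, hC, hgen, -⟩ := ht
      rw [hgen.def]
      exact hCompSub C hC
  · -- pairwise disjoint
    intro t ht t' ht' htne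
    rw [Set.disjoint_left]
    rintro x ⟨hx1, hx2⟩ ⟨hx1', -⟩
    exact hx2 (hiii t ht t' ht' htne ⟨hx1, hx1'⟩)
  · -- (iv)
    intro t ht htZ
    obtain ⟨C, hC, hgen, hcs⟩ := ht
    obtain ⟨q, hq, htq⟩ := htZ
    have hCq_of : ∀ D : Set X, IsClosed D → t ∈ D → C ⊆ D := fun D hD htD => by
      rw [← hgen.def]; exact closure_minimal (singleton_subset_iff.mpr htD) hD
    rcases Set.mem_insert_iff.mp hq with hqZ | hq
    · rw [hqZ] at htq
      have hCZ : C ⊆ Z := hCq_of Z hZcl htq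
      obtain ⟨V, hV, hCV⟩ := exists_comp hZcl (hCompIrr C hC) hCZ
      have h1 : (s : ℕ∞) + 1 ≤ irredCodim C := hZ.trans ((sInf_le
        (mem_image_of_mem _ hV)).trans (irredCodim_anti (hCompCl C hC) (hCompIrr C hC) hCV))
      rw [hcs] at h1
      exact absurd ((ENat.add_one_le_iff (ENat.coe_ne_top s)).mp h1) (lt_irrefl _)
    · rcases hq with hq | ⟨D, hD, D', hD', hne, rfl⟩
      · have hCeq : C = q := hmax C hC q (hCompSub q hq.1) (hCompIrr q hq.1)
          (hCq_of q (hCompCl q hq.1) htq)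
        exact hq.2 (hCeq ▸ hcs)
      · have h1 : C = D := hmax C hC D (hCompSub D hD) (hCompIrr D hD)
          (hCq_of D (hCompCl D hD) htq.1)
        have h2 : C = D' := hmax C hC D' (hCompSub D' hD') (hCompIrr D' hD')
          (hCq_of D' (hCompCl D' hD') htq.2)
        exact hne (h1.symm.trans h2)
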